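/- Let B : Λ × Λ → ℝ be any symmetric bilinear form satisfying the invariance conditions B(ρ(K₁)u, v) = B(u, ρ(K₁)v), B(ρ(K₂)u, v) = B(u, ρ(K₂)v), B(ρ(E₁)u, v) = B(u, (ρ(F₁)∘ρ(K₁))v), and B(ρ(F₁)u, v) = B(u, (ρ(K₁)⁻¹∘ρ(E₁))v) for all u, v ∈ Λ. Then the basis w₀, w₁, w₂, w₃, w₂₁, w₃₁, w₃₂, w₃₂₁ is B-orthogonal and there exist real constants c₀, c₁, c₂, c₃ such that B(w₀,w₀) = c₀, B(w₁,w₁) = c₁, B(w₂,w₂) = c₁/[2]_q, B(w₃,w₃) = c₁q⁻², B(w₂₁,w₂₁) = c₂, B(w₃₁,w₃₁) = c₂[2]_q, B(w₃₂,w₃₂) = c₂q⁻², B(w₃₂₁,w₃₂₁) = c₃. (Classification of the U_q(𝔩)-invariant inner products on the quantum exterior algebra Λ_q(𝔲₋).) -/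

import Mathlib

noncomputable section

open scoped TensorProduct RealInnerProductSpace

/-- The quantum integer `[n]_q = (q^n - q^(-n))/(q - q⁻¹)`. -/
def qnum (q : ℝ) (n : ℤ) : ℝ := (q ^ n - q ^ (-n)) / (q - q⁻¹)

variable {Λ : Type} [AddCommGroup Λ] [Module ℝ Λ]

/-- The operator `ρ(K₁)` on `Λ`. -/
def rhoK1 (q : ℝ) (b : Module.Basis (Fin 8) ℝ Λ) : Module.End ℝ Λ :=
  b.constr ℝ ![b 0, (q ^ (-2 : ℤ)) • b 1, b 2, (q ^ (2 : ℤ)) • b 3, (q ^ (-2 : ℤ)) • b 4,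
    b 5, (q ^ (2 : ℤ)) • b 6, b 7]

/-- The operator `ρ(K₂)` on `Λ`. -/
def rhoK2 (q : ℝ) (b : Module.Basis (Fin 8) ℝ Λ) : Module.End ℝ Λ :=
  b.constr ℝ ![b 0, b 1, (q ^ (-2 : ℤ)) • b 2, (q ^ (-4 : ℤ)) • b 3, (q ^ (-2 : ℤ)) • b 4,
    (q ^ (-4 : ℤ)) • b 5, (q ^ (-6 : ℤ)) • b 6, (q ^ (-6 : ℤ)) • b 7]

/-- The operator `ρ(E₁)` on `Λ`. -/
def rhoE1 (q : ℝ) (b : Module.Basis (Fin 8) ℝ Λ) : Module.End ℝ Λ :=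
  b.constr ℝ ![0, -((q + q⁻¹)) • b 2, -(q ^ (2 : ℤ)) • b 3, 0, -b 5,
    -((q + q⁻¹) * q ^ (2 : ℤ)) • b 6, 0, 0]

/-- The operator `ρ(F₁)` on `Λ`. -/
def rhoF1 (q : ℝ) (b : Module.Basis (Fin 8) ℝ Λ) : Module.End ℝ Λ :=
  b.constr ℝ ![0, 0, -b 1, -((q + q⁻¹) * q ^ (-2 : ℤ)) • b 2, 0, -((q + q⁻¹)) • b 4,
    -(q ^ (-2 : ℤ)) • b 5, 0]

/-- The operator `ρ(K₁)⁻¹` on `Λ`. -/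
def rhoK1i (q : ℝ) (b : Module.Basis (Fin 8) ℝ Λ) : Module.End ℝ Λ :=
  b.constr ℝ ![b 0, (q ^ (2 : ℤ)) • b 1, b 2, (q ^ (-2 : ℤ)) • b 3, (q ^ (2 : ℤ)) • b 4,
    b 5, (q ^ (-2 : ℤ)) • b 6, b 7]

/-- The operator `ρ(K₂)⁻¹` on `Λ`. -/
def rhoK2i (q : ℝ) (b : Module.Basis (Fin 8) ℝ Λ) : Module.End ℝ Λ :=
  b.constr ℝ ![b 0, b 1, (q ^ (2 : ℤ)) • b 2, (q ^ (4 : ℤ)) • b 3, (q ^ (2 : ℤ)) • b 4,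
    (q ^ (4 : ℤ)) • b 5, (q ^ (6 : ℤ)) • b 6, (q ^ (6 : ℤ)) • b 7]

/-- K1-exponents. -/
def eK1 : Fin 8 → ℤ := ![0, -2, 0, 2, -2, 0, 2, 0]

/-- K2-exponents. -/
def eK2 : Fin 8 → ℤ := ![0, 0, -2, -4, -2, -4, -6, -6]

lemma rhoK1_apply (q : ℝ) (b : Module.Basis (Fin 8) ℝ Λ) (i : Fin 8) :
    rhoK1 q b (b i) = (q ^ (eK1 i)) • b i := by
  fin_cases i <;> rw [rhoK1, Module.Basis.constr_basis] <;>
    first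
      | rfl
      | (show b _ = q ^ (0 : ℤ) • b _
         rw [zpow_zero, one_smul]
         try rfl)

lemma rhoK2_apply (q : ℝ) (b : Module.Basis (Fin 8) ℝ Λ) (i : Fin 8) :
    rhoK2 q b (b i) = (q ^ (eK2 i)) • b i := by
  fin_cases i <;> rw [rhoK2, Module.Basis.constr_basis] <;>
    first
      | rfl
      | (show b _ = q ^ (0 : ℤ) • b _
         rw [zpow_zero, one_smul]
         try rfl)

theorem invariant_inner_products (q : ℝ) (hq0 : 0 < q) (hq1 : q < 1)
    (b : Module.Basis (Fin 8) ℝ Λ) (B : Λ →ₗ[ℝ] Λ →ₗ[ℝ] ℝ)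
    (hsymm : ∀ u v : Λ, B u v = B v u)
    (hK1 : ∀ u v : Λ, B (rhoK1 q b u) v = B u (rhoK1 q b v))
    (hK2 : ∀ u v : Λ, B (rhoK2 q b u) v = B u (rhoK2 q b v))
    (hE1 : ∀ u v : Λ, B (rhoE1 q b u) v = B u ((rhoF1 q b * rhoK1 q b) v))
    (hF1 : ∀ u v : Λ, B (rhoF1 q b u) v = B u ((rhoK1i q b * rhoE1 q b) v)) :
    (∀ i j : Fin 8, i ≠ j → B (b i) (b j) = 0) ∧
      ∃ c0 c1 c2 c3 : ℝ,
        B (b 0) (b 0) = c0 ∧ B (b 1) (b 1) = c1 ∧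
        B (b 2) (b 2) = c1 / (q + q⁻¹) ∧ B (b 3) (b 3) = c1 * q ^ (-2 : ℤ) ∧
        B (b 4) (b 4) = c2 ∧ B (b 5) (b 5) = c2 * (q + q⁻¹) ∧
        B (b 6) (b 6) = c2 * q ^ (-2 : ℤ) ∧ B (b 7) (b 7) = c3 := by
  have hqne : q ≠ 1 := ne_of_lt hq1
  have hx : ∀ (m n : ℤ) (x : ℝ), q ^ m * x = q ^ n * x → m ≠ n → x = 0 := by
    intro m n x h hmn
    have hq : (q : ℝ) ^ m ≠ q ^ n := fun hc => hmn (zpow_right_injective₀ hq0 hqne hc)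
    have : (q ^ m - q ^ n) * x = 0 := by ring_nf; linarith [h]
    rcases mul_eq_zero.mp this with h' | h'
    · exact absurd (sub_eq_zero.mp h') hq
    · exact h'
  constructor
  · intro i j hij
    have h1 := hK1 (b i) (b j)
    have h2 := hK2 (b i) (b j)
    rw [rhoK1_apply, rhoK1_apply] at h1
    rw [rhoK2_apply, rhoK2_apply] at h2
    simp only [map_smul, LinearMap.smul_apply, smul_eq_mul] at h1 h2
    have hne : eK1 i ≠ eK1 j ∨ eK2 i ≠ eK2 j := by
      clear h1 h2; revert hij; revert i j; decide
    rcases hne with h | h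
    · exact hx _ _ _ h1 h
    · exact hx _ _ _ h2 h
  · have h2pos : (0:ℝ) < q + q⁻¹ := by positivity
    have h2ne : (q + q⁻¹) ≠ 0 := ne_of_gt h2pos
    have hqnz : q ≠ 0 := ne_of_gt hq0
    have hE1b1 : rhoE1 q b (b 1) = (-(q + q⁻¹)) • b 2 := by rw [rhoE1, Module.Basis.constr_basis]; rfl
    have hE1b2 : rhoE1 q b (b 2) = (-(q ^ (2:ℤ))) • b 3 := by rw [rhoE1, Module.Basis.constr_basis]; rfl
    have hE1b4 : rhoE1 q b (b 4) = (-1 : ℝ) • b 5 := by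
      rw [rhoE1, Module.Basis.constr_basis]; rw [neg_one_smul]; rfl
    have hE1b5 : rhoE1 q b (b 5) = (-((q + q⁻¹) * q ^ (2:ℤ))) • b 6 := by
      rw [rhoE1, Module.Basis.constr_basis]; rfl
    have hF1b2 : rhoF1 q b (b 2) = (-1 : ℝ) • b 1 := by
      rw [rhoF1, Module.Basis.constr_basis]; rw [neg_one_smul]; rfl
    have hF1b3 : rhoF1 q b (b 3) = (-((q + q⁻¹) * q ^ (-2:ℤ))) • b 2 := by
      rw [rhoF1, Module.Basis.constr_basis]; rfl
    have hF1b5 : rhoF1 q b (b 5) = (-(q + q⁻¹)) • b 4 := by rw [rhoF1, Module.Basis.constr_basis]; rfl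
    have hF1b6 : rhoF1 q b (b 6) = (-(q ^ (-2:ℤ))) • b 5 := by rw [rhoF1, Module.Basis.constr_basis]; rfl
    have hK1b2 : rhoK1 q b (b 2) = b 2 := by rw [rhoK1, Module.Basis.constr_basis]; rfl
    have hK1b3 : rhoK1 q b (b 3) = (q ^ (2:ℤ)) • b 3 := by rw [rhoK1, Module.Basis.constr_basis]; rfl
    have hK1b5 : rhoK1 q b (b 5) = b 5 := by rw [rhoK1, Module.Basis.constr_basis]; rfl
    have hK1b6 : rhoK1 q b (b 6) = (q ^ (2:ℤ)) • b 6 := by rw [rhoK1, Module.Basis.constr_basis]; rfl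
    have e12 := hE1 (b 1) (b 2)
    have e23 := hE1 (b 2) (b 3)
    have e45 := hE1 (b 4) (b 5)
    have e56 := hE1 (b 5) (b 6)
    simp only [Module.End.mul_apply, hE1b1, hE1b2, hE1b4, hE1b5, hF1b2, hF1b3, hF1b5, hF1b6,
      hK1b2, hK1b3, hK1b5, hK1b6, map_smul, LinearMap.smul_apply, smul_eq_mul] at e12 e23 e45 e56
    refine ⟨B (b 0) (b 0), B (b 1) (b 1), B (b 4) (b 4), B (b 7) (b 7),
      rfl, rfl, ?_, ?_, rfl, ?_, ?_, rfl⟩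
    · field_simp at e12 ⊢; linarith
    · have h22 : B (b 2) (b 2) = B (b 1) (b 1) / (q + q⁻¹) := by field_simp at e12 ⊢; linarith
      rw [h22] at e23
      simp only [zpow_neg, zpow_two] at e23
      field_simp at e23
      have hfac : (q ^ 3 * (q * q + 1)) * ((q * q) * B (b 3) (b 3) - B (b 1) (b 1)) = 0 := by
        linear_combination (-(q ^ 3 * (q * q + 1))) * e23
      have hne3 : (q ^ 3 * (q * q + 1)) ≠ 0 := by positivity
      have h2 := (mul_eq_zero.mp hfac).resolve_left hne3
      rw [zpow_neg, zpow_two]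
      field_simp
      linear_combination h2
    · field_simp at e45 ⊢; linarith
    · have h55 : B (b 5) (b 5) = B (b 4) (b 4) * (q + q⁻¹) := by field_simp at e45 ⊢; linarith
      rw [h55] at e56
      simp only [zpow_neg, zpow_two] at e56
      field_simp at e56
      have hfac : (q ^ 3 * (q * q + 1)) * ((q * q) * B (b 6) (b 6) - B (b 4) (b 4)) = 0 := by
        linear_combination (-(q ^ 3 * (q * q + 1))) * e56
      have hne3 : (q ^ 3 * (q * q + 1)) ≠ 0 := by positivity
      have h2 := (mul_eq_zero.mp hfac).resolve_left hne3
      rw [zpow_neg, zpow_two]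
      field_simp
      linear_combination h2
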